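/- Let A be an abelian category and let E• be a cochain complex with a decoration M•, i.e., a subobject Mⁿ ⊆ Eⁿ for each n (not necessarily preserved by the differential δ). Define H^{-1,n}(E•,M•) = ker(Mⁿ → E^{n+1}/M^{n+1}) and H^{0,n}(E•,M•) = coker(Mⁿ → E^{n+1}/M^{n+1}), where the map is induced by δ. Then the objects H^{-1,n} assemble into a cochain complex 𝓗^{-1}(E•,M•) with differentials induced by δ, and similarly the H^{0,n} assemble into a complex 𝓗^{0}(E•,M•). -/

import Mathlib

open CategoryTheory CategoryTheory.Limits

universe v u

/-- A decorated complex in an abelian category: a cochain complex together with a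
graded subobject `M`, not necessarily respected by the differential. -/
structure DecoratedComplex (A : Type u) [Category.{v} A] [Abelian A] where
  X : ℤ → A
  d : ∀ n : ℤ, X n ⟶ X (n + 1)
  d_sq : ∀ n : ℤ, d n ≫ d (n + 1) = 0
  M : ℤ → A
  ι : ∀ n : ℤ, M n ⟶ X n
  mono : ∀ n : ℤ, Mono (ι n)

namespace DecoratedComplex

variable {A : Type u} [Category.{v} A] [Abelian A] (D : DecoratedComplex A)

/-- The quotient `Eⁿ/Mⁿ`. -/
noncomputable abbrev Q (n : ℤ) : A := cokernel (D.ι n)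

/-- The canonical map `Mⁿ ⟶ E^{n+1}/M^{n+1}` induced by the differential. -/
noncomputable def φ (n : ℤ) : D.M n ⟶ D.Q (n + 1) :=
  D.ι n ≫ D.d n ≫ cokernel.π (D.ι (n + 1))

/-- `H^{-1,n}` of a decorated complex. -/
noncomputable abbrev Hneg (n : ℤ) : A := kernel (D.φ n)

/-- `H^{0,n}` of a decorated complex. -/
noncomputable abbrev Hpos (n : ℤ) : A := cokernel (D.φ n)

end DecoratedComplex

open DecoratedComplex in
/-- The objects `H^{-1,n}` (resp. `H^{0,n}`) of a decorated complex assemble into a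
cochain complex, with differentials induced by `δ`. -/
theorem decorated_cohomology_complexes {A : Type u} [Category.{v} A] [Abelian A]
    (D : DecoratedComplex A) :
    ∃ (dneg : ∀ n : ℤ, D.Hneg n ⟶ D.Hneg (n + 1))
      (dpos : ∀ n : ℤ, D.Hpos n ⟶ D.Hpos (n + 1)),
      (∀ n : ℤ, dneg n ≫ kernel.ι (D.φ (n + 1)) ≫ D.ι (n + 1) =
          kernel.ι (D.φ n) ≫ D.ι n ≫ D.d n) ∧
      (∀ n : ℤ, dneg n ≫ dneg (n + 1) = 0) ∧
      (∀ n : ℤ, cokernel.π (D.ι (n + 1)) ≫ cokernel.π (D.φ n) ≫ dpos n =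
          D.d (n + 1) ≫ cokernel.π (D.ι (n + 1 + 1)) ≫ cokernel.π (D.φ (n + 1))) ∧
      (∀ n : ℤ, dpos n ≫ dpos (n + 1) = 0) := by
  have := D.mono
  -- negative part
  have hfac : ∀ n : ℤ, (kernel.ι (D.φ n) ≫ D.ι n ≫ D.d n) ≫ cokernel.π (D.ι (n + 1)) = 0 := by
    intro n
    simpa [φ] using kernel.condition (D.φ n)
  set g : ∀ n : ℤ, D.Hneg n ⟶ D.M (n + 1) := fun n =>
    Abelian.monoLift (D.ι (n + 1)) _ (hfac n) with hg
  have hgι : ∀ n : ℤ, g n ≫ D.ι (n + 1) = kernel.ι (D.φ n) ≫ D.ι n ≫ D.d n := fun n =>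
    Abelian.monoLift_comp _ _ _
  have hgφ : ∀ n : ℤ, g n ≫ D.φ (n + 1) = 0 := by
    intro n
    rw [φ, ← Category.assoc, hgι]
    slice_lhs 3 4 => rw [D.d_sq n]
    simp
  refine ⟨fun n => kernel.lift (D.φ (n + 1)) (g n) (hgφ n), ?_⟩
  have hdι : ∀ n : ℤ, kernel.lift (D.φ (n + 1)) (g n) (hgφ n) ≫ kernel.ι (D.φ (n + 1)) ≫
      D.ι (n + 1) = kernel.ι (D.φ n) ≫ D.ι n ≫ D.d n := by
    intro n
    rw [← Category.assoc, kernel.lift_ι, hgι]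
  -- positive part
  have hdesc : ∀ n : ℤ, D.ι (n + 1) ≫ D.d (n + 1) ≫ cokernel.π (D.ι (n + 1 + 1)) ≫
      cokernel.π (D.φ (n + 1)) = 0 := by
    intro n
    rw [← Category.assoc, ← Category.assoc, Category.assoc (D.ι (n+1)), ← φ]
    simp
  set q : ∀ n : ℤ, D.Q (n + 1) ⟶ D.Hpos (n + 1) := fun n =>
    cokernel.desc (D.ι (n + 1)) _ (hdesc n) with hq
  have hπq : ∀ n : ℤ, cokernel.π (D.ι (n + 1)) ≫ q n =
      D.d (n + 1) ≫ cokernel.π (D.ι (n + 1 + 1)) ≫ cokernel.π (D.φ (n + 1)) := fun n =>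
    cokernel.π_desc _ _ _
  have hφq : ∀ n : ℤ, D.φ n ≫ q n = 0 := by
    intro n
    rw [φ, Category.assoc, Category.assoc, hπq]
    slice_lhs 2 3 => rw [D.d_sq n]
    simp
  refine ⟨fun n => cokernel.desc (D.φ n) (q n) (hφq n), ?_, ?_, ?_, ?_⟩
  · exact hdι
  · intro n
    have h : (kernel.lift (D.φ (n + 1)) (g n) (hgφ n) ≫
        kernel.lift (D.φ (n + 1 + 1)) (g (n + 1)) (hgφ (n + 1))) ≫
        kernel.ι (D.φ (n + 1 + 1)) ≫ D.ι (n + 1 + 1) = 0 := by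
      slice_lhs 2 4 => rw [hdι (n + 1)]
      slice_lhs 1 3 => rw [hdι n]
      slice_lhs 3 4 => rw [D.d_sq n]
      simp
    have : Mono (kernel.ι (D.φ (n + 1 + 1)) ≫ D.ι (n + 1 + 1)) := mono_comp _ _
    rw [← cancel_mono (kernel.ι (D.φ (n + 1 + 1)) ≫ D.ι (n + 1 + 1)), h, zero_comp]
  · intro n
    rw [← Category.assoc, Category.assoc (cokernel.π (D.ι (n+1))), cokernel.π_desc, hπq]
  · intro n
    have h : cokernel.π (D.ι (n + 1)) ≫ cokernel.π (D.φ n) ≫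
        cokernel.desc (D.φ n) (q n) (hφq n) ≫
        cokernel.desc (D.φ (n + 1)) (q (n + 1)) (hφq (n + 1)) = 0 := by
      slice_lhs 2 3 => rw [cokernel.π_desc]
      slice_lhs 1 2 => rw [hπq n]
      slice_lhs 3 4 => rw [cokernel.π_desc]
      slice_lhs 2 3 => rw [hπq (n + 1)]
      slice_lhs 1 2 => rw [D.d_sq (n + 1)]
      simp
    have : Epi (cokernel.π (D.ι (n + 1)) ≫ cokernel.π (D.φ n)) := epi_comp _ _
    rw [← cancel_epi (cokernel.π (D.ι (n + 1)) ≫ cokernel.π (D.φ n)), comp_zero,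
      Category.assoc, h]
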